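/- Let U ≠ ∅ be an unfounded set of a ground HEX-program Π with respect to a complete assignment A that contains no e-cycle under →ᵈ = → ∪ →⁻¹ ∪ →ₑ (restricted to atoms of U). Then there exists a nonempty unfounded set of the guessing program Π̂ with respect to the compatible extension Â of A. -/

import Mathlib

/-- A ground external atom: a set of input atoms and an oracle function whose
value depends only on the assignment restricted to the input atoms. -/
structure ExtAtom (Atom : Type) where
  inputs : Finset Atom
  eval : (Atom → Bool) → Bool
  dep : ∀ A B : Atom → Bool, (∀ a ∈ inputs, A a = B a) → eval A = eval B

/-- A ground HEX-rule: head, ordinary positive body, ordinary negative body,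
positive external body, negative external body. -/
structure Rule (Atom : Type) where
  head : Finset Atom
  posOrd : Finset Atom
  negOrd : Finset Atom
  posExt : List (ExtAtom Atom)
  negExt : List (ExtAtom Atom)

/-- A ground HEX-program is a set of rules (finiteness is assumed explicitly). -/
abbrev Program (Atom : Type) := Set (Rule Atom)

variable {Atom : Type} [DecidableEq Atom]

/-- The ordinary atoms occurring in a rule. -/
def Rule.atoms (r : Rule Atom) : Finset Atom :=
  r.head ∪ r.posOrd ∪ r.negOrd ∪
    ((r.posExt ++ r.negExt).foldr (fun e s => e.inputs ∪ s) ∅)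

/-- The ordinary atoms `A(Π)` occurring in a program. -/
def progAtoms (P : Program Atom) : Set Atom := ⋃ r ∈ P, (r.atoms : Set Atom)

/-- `A ∪̇¬ X`: set all atoms of `X` to false in `A`. -/
def unplug (A : Atom → Bool) (X : Finset Atom) : Atom → Bool :=
  fun a => A a && !(decide (a ∈ X))

/-- All body literals of `r` are true wrt. the complete assignment `B`. -/
def Rule.bodyTrueAt (r : Rule Atom) (B : Atom → Bool) : Prop :=
  (∀ a ∈ r.posOrd, B a = true) ∧ (∀ a ∈ r.negOrd, B a = false) ∧
  (∀ e ∈ r.posExt, e.eval B = true) ∧ (∀ e ∈ r.negExt, e.eval B = false)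

/-- Some body literal of `r` is false wrt. the complete assignment `B`. -/
def Rule.bodyFalseAt (r : Rule Atom) (B : Atom → Bool) : Prop :=
  (∃ a ∈ r.posOrd, B a = false) ∨ (∃ a ∈ r.negOrd, B a = true) ∨
  (∃ e ∈ r.posExt, e.eval B = false) ∨ (∃ e ∈ r.negExt, e.eval B = true)

/-- `X` is an unfounded set of `P` wrt. the complete assignment `A`
(Definition of unfounded sets for HEX-programs). -/
def isUnfounded (P : Program Atom) (A : Atom → Bool) (X : Finset Atom) : Prop :=
  ∀ r ∈ P, (r.head ∩ X).Nonempty →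
    r.bodyFalseAt A ∨ r.bodyFalseAt (unplug A X) ∨
    ∃ h ∈ r.head, h ∉ X ∧ A h = true

/-- `A` is a (complete) model of `P`. -/
def isModel (A : Atom → Bool) (P : Program Atom) : Prop :=
  ∀ r ∈ P, r.bodyTrueAt A → ∃ h ∈ r.head, A h = true

/-- Ordinary dependency `a → b`. -/
def ordDep (P : Program Atom) (a b : Atom) : Prop :=
  ∃ r ∈ P, a ∈ r.head ∧ b ∈ r.posOrd

/-- External dependency (e-edge) `a →ₑ b`. -/
def eDep (P : Program Atom) (a b : Atom) : Prop :=
  ∃ r ∈ P, a ∈ r.head ∧ ∃ e ∈ r.posExt ++ r.negExt, b ∈ e.inputs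

/-- The relation `→ᵈ = → ∪ →⁻¹ ∪ →ₑ`. -/
def dDep (P : Program Atom) (a b : Atom) : Prop :=
  ordDep P a b ∨ ordDep P b a ∨ eDep P a b

/-- `C` is a cut of the unfounded set `U`: `C ⊆ U`, `C` has no incoming or
internal e-edges from `U`, and there are no ordinary edges between `C` and
`U \ C` in either direction. -/
def isCut (P : Program Atom) (U C : Finset Atom) : Prop :=
  C ⊆ U ∧ (∀ a ∈ C, ∀ b ∈ U, ¬ eDep P b a) ∧
  (∀ a ∈ C, ∀ b ∈ U \ C, ¬ ordDep P a b ∧ ¬ ordDep P b a)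

/-- Some body literal of the rule corresponding to `r` in the guessing program
`Π̂` is false wrt. `B` extended to the compatible extension `Â` of `A`:
ordinary literals are evaluated at `B`, while external replacement atoms obtain
(by compatibility) the oracle value at `A`. -/
def Rule.bodyFalseHat (r : Rule Atom) (A B : Atom → Bool) : Prop :=
  (∃ a ∈ r.posOrd, B a = false) ∨ (∃ a ∈ r.negOrd, B a = true) ∨
  (∃ e ∈ r.posExt, e.eval A = false) ∨ (∃ e ∈ r.negExt, e.eval A = true)

/-- `X` (a set of ordinary atoms) is an unfounded set of the guessing program
`Π̂` wrt. the compatible extension `Â` of `A`.  Since `X` contains only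
ordinary atoms and the guessing rules have only replacement atoms in their
heads, this unfolds to the condition below, where replacement atoms keep their
(compatible) value under `Â ∪̇¬ X`. -/
def isUnfoundedHat (P : Program Atom) (A : Atom → Bool) (X : Finset Atom) : Prop :=
  ∀ r ∈ P, (r.head ∩ X).Nonempty →
    r.bodyFalseHat A A ∨ r.bodyFalseHat A (unplug A X) ∨
    ∃ h ∈ r.head, h ∉ X ∧ A h = true

/-- The set `S` contains a cycle under `→ᵈ` that uses at least one e-edge. -/
def hasECycleIn (P : Program Atom) (S : Set Atom) : Prop :=
  ∃ (n : ℕ) (c : ℕ → Atom),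
    (∀ i ≤ n, dDep P (c i) (c (i+1))) ∧ c 0 = c (n+1) ∧
    (∀ i ≤ n+1, c i ∈ S) ∧ ∃ i ≤ n, eDep P (c i) (c (i+1))

/-- `a` is a cyclic input atom: some `b` with `b →ₑ a` and a path from `a`
to `b` under `→ᵈ`. -/
def cyclicInput (P : Program Atom) (a : Atom) : Prop :=
  ∃ b, eDep P b a ∧ Relation.ReflTransGen (dDep P) a b

/-- The FLP-reduct `fΠ^A`. -/
def flpReduct (P : Program Atom) (A : Atom → Bool) : Program Atom :=
  { r ∈ P | r.bodyTrueAt A }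

/-- `A₁ ≤_Π A₂`. -/
def leP (P : Program Atom) (A₁ A₂ : Atom → Bool) : Prop :=
  ∀ a ∈ progAtoms P, A₁ a = true → A₂ a = true

/-- `A` is an answer set of `P`: a `≤_Π`-minimal model of the FLP-reduct. -/
def isAnswerSet (P : Program Atom) (A : Atom → Bool) : Prop :=
  isModel A (flpReduct P A) ∧
  ∀ A' : Atom → Bool, isModel A' (flpReduct P A) → leP P A' A → leP P A A'

/-- The dependency relation `→ ∪ →ₑ` used for strongly connected components. -/
def dep (P : Program Atom) (a b : Atom) : Prop := ordDep P a b ∨ eDep P a b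

/-- Mutual reachability under `→ ∪ →ₑ`. -/
def sameSCC (P : Program Atom) (a b : Atom) : Prop :=
  Relation.ReflTransGen (dep P) a b ∧ Relation.ReflTransGen (dep P) b a

/-- The strongly connected component of `a` under `→ ∪ →ₑ`. -/
def scc (P : Program Atom) (a : Atom) : Set Atom := { b | sameSCC P a b }

/-- The subprogram `Π_C` associated with a component `C`. -/
def subprog (P : Program Atom) (C : Set Atom) : Program Atom :=
  { r ∈ P | ∃ h ∈ r.head, h ∈ C }

/-- Auxiliary: ordinary (symmetric) dependency restricted to `U`. -/
def Orel (P : Program Atom) (U : Finset Atom) (a b : Atom) : Prop :=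
  (ordDep P a b ∨ ordDep P b a) ∧ a ∈ U ∧ b ∈ U

/-- Auxiliary: `→ᵈ` restricted to `U`. -/
def Drel (P : Program Atom) (U : Finset Atom) (a b : Atom) : Prop :=
  dDep P a b ∧ a ∈ U ∧ b ∈ U

lemma rtg_chain {α : Type*} {D : α → α → Prop} {b a : α}
    (h : Relation.ReflTransGen D b a) :
    ∃ n, ∃ c : ℕ → α, c 0 = b ∧ c n = a ∧ ∀ i < n, D (c i) (c (i+1)) := by
  induction h with
  | refl => exact ⟨0, fun _ => b, rfl, rfl, fun i hi => absurd hi (Nat.not_lt_zero i)⟩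
  | @tail m a' h1 h2 ih =>
    obtain ⟨n, c, hc0, hcn, hstep⟩ := ih
    classical
    refine ⟨n+1, fun i => if i ≤ n then c i else a', ?_, ?_, ?_⟩
    · simp [hc0]
    · simp
    · intro i hi
      rcases Nat.lt_succ_iff_lt_or_eq.mp hi with h | h
      · have h1' : i ≤ n := le_of_lt h
        have h2' : i + 1 ≤ n := h
        simpa [h1', h2'] using hstep i h
      · subst h
        simpa [hcn] using h2

lemma cycle_of_loop (P : Program Atom) (U : Finset Atom) {a b : Atom}
    (ha : a ∈ U) (he : eDep P a b)
    (hp : Relation.ReflTransGen (Drel P U) b a) :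
    hasECycleIn P (↑U : Set Atom) := by
  obtain ⟨n, c, hc0, hcn, hstep⟩ := rtg_chain hp
  have hb : b ∈ U := by
    rcases Relation.ReflTransGen.cases_head hp with h | ⟨z, hz, _⟩
    · rw [h]; exact ha
    · exact hz.2.1
  have hmem : ∀ j ≤ n, c j ∈ U := by
    intro j hj
    cases j with
    | zero => rw [hc0]; exact hb
    | succ k => exact (hstep k hj).2.2
  classical
  refine ⟨n, fun i => if i = 0 then a else c (i-1), ?_, ?_, ?_, ?_⟩
  · intro i hi
    cases i with
    | zero =>
      have hd : dDep P a b := Or.inr (Or.inr he)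
      simpa [hc0] using hd
    | succ k =>
      simpa using (hstep k hi).1
  · simp [hcn]
  · intro i hi
    cases i with
    | zero => simpa using ha
    | succ k => simpa using hmem k (Nat.lt_succ_iff.mp hi)
  · exact ⟨0, Nat.zero_le n, by simpa [hc0] using he⟩

lemma orel_reach_mem (P : Program Atom) (U : Finset Atom) {u a : Atom}
    (h : Relation.ReflTransGen (Orel P U) u a) (hu : u ∈ U) : a ∈ U := by
  induction h with
  | refl => exact hu
  | tail _ h2 ih => exact h2.2.2

lemma exists_source (P : Program Atom) (U : Finset Atom) (hne : U.Nonempty)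
    (hnoc : ¬ hasECycleIn P (↑U : Set Atom)) :
    ∃ u ∈ U, ∀ x, Relation.ReflTransGen (Orel P U) u x → ∀ b ∈ U, ¬ eDep P x b := by
  classical
  by_contra hcon
  push_neg at hcon
  have step : ∀ u, u ∈ U → ∃ v, v ∈ U ∧
      ∃ x, Relation.ReflTransGen (Orel P U) u x ∧ eDep P x v := by
    intro u hu
    obtain ⟨x, hx, b, hb, he⟩ := hcon u hu
    exact ⟨b, hb, x, hx, he⟩
  choose! f hfU hfS using step
  obtain ⟨u₀, hu₀⟩ := hne
  have hg : ∀ i, f^[i] u₀ ∈ U := by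
    intro i
    induction i with
    | zero => simpa using hu₀
    | succ k ih => rw [Function.iterate_succ_apply']; exact hfU _ ih
  obtain ⟨m, n, hmn, heq⟩ :=
    Finite.exists_ne_map_eq_of_infinite
      (fun i : ℕ => (⟨f^[i] u₀, hg i⟩ : {x // x ∈ U}))
  have heq' : f^[m] u₀ = f^[n] u₀ := congrArg Subtype.val heq
  have hOD : ∀ {u x : Atom}, Relation.ReflTransGen (Orel P U) u x →
      Relation.ReflTransGen (Drel P U) u x := by
    intro u x h
    exact Relation.ReflTransGen.mono (r := Orel P U) (p := Drel P U) (fun a b hab => ⟨Or.elim hab.1 Or.inl (fun h' => Or.inr (Or.inl h')), hab.2⟩) u x h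
  have hSD : ∀ u, u ∈ U → Relation.ReflTransGen (Drel P U) u (f u) := by
    intro u hu
    obtain ⟨x, hx, he⟩ := hfS u hu
    exact (hOD hx).tail ⟨Or.inr (Or.inr he), orel_reach_mem P U hx hu, hfU u hu⟩
  have hiter : ∀ i j, Relation.ReflTransGen (Drel P U) (f^[i] u₀) (f^[i+j] u₀) := by
    intro i j
    induction j with
    | zero => exact .refl
    | succ k ih =>
      have : f^[i+(k+1)] u₀ = f (f^[i+k] u₀) := by
        rw [← Nat.add_assoc, Function.iterate_succ_apply']
      rw [this]
      exact ih.trans (hSD _ (hg _))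
  -- wlog m < n
  have main : ∀ m n : ℕ, m < n → f^[m] u₀ = f^[n] u₀ → False := by
    intro m n hlt heq'
    obtain ⟨x, hx, he⟩ := hfS (f^[m] u₀) (hg m)
    have hxU : x ∈ U := orel_reach_mem P U hx (hg m)
    have hpath : Relation.ReflTransGen (Drel P U) (f (f^[m] u₀)) x := by
      have h1 : Relation.ReflTransGen (Drel P U) (f^[m+1] u₀) (f^[n] u₀) := by
        have : m + 1 + (n - (m+1)) = n := by omega
        simpa [this] using hiter (m+1) (n - (m+1))
      rw [← heq'] at h1
      have h1' : Relation.ReflTransGen (Drel P U) (f (f^[m] u₀)) (f^[m] u₀) := by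
        rwa [Function.iterate_succ_apply'] at h1
      exact h1'.trans (hOD hx)
    exact hnoc (cycle_of_loop P U hxU he hpath)
  rcases hmn.lt_or_gt with h | h
  · exact main m n h heq'
  · exact main n m h heq'.symm

/-- Relevance of e-cycles: a nonempty unfounded set of `Π` wrt. `A` containing
no e-cycle under `→ᵈ` yields a nonempty unfounded set of `Π̂` wrt. `Â`. -/
theorem ecycle_relevance (P : Program Atom) (hP : P.Finite)
    (A : Atom → Bool) (U : Finset Atom) (hne : U.Nonempty)
    (hUatoms : ↑U ⊆ progAtoms P)
    (hU : isUnfounded P A U)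
    (hnoc : ¬ hasECycleIn P (↑U : Set Atom)) :
    ∃ U' : Finset Atom, U'.Nonempty ∧ ↑U' ⊆ progAtoms P ∧
      isUnfoundedHat P A U' := by
  classical
  obtain ⟨u₀, hu₀, hgood⟩ := exists_source P U hne hnoc
  set C : Finset Atom := U.filter (fun a => Relation.ReflTransGen (Orel P U) u₀ a) with hCdef
  have hCsub : C ⊆ U := Finset.filter_subset _ _
  refine ⟨C, ⟨u₀, Finset.mem_filter.mpr ⟨hu₀, .refl⟩⟩, ?_, ?_⟩
  · intro a ha
    exact hUatoms (Finset.mem_coe.mpr (hCsub (Finset.mem_coe.mp ha)))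
  · intro r hr hhead
    obtain ⟨h, hh⟩ := hhead
    rw [Finset.mem_inter] at hh
    have hC := Finset.mem_filter.mp hh.2
    rcases hU r hr ⟨h, Finset.mem_inter.mpr ⟨hh.1, hC.1⟩⟩ with h1 | h2 | h3
    · exact Or.inl h1
    · refine Or.inr (Or.inl ?_)
      have hinp : ∀ e ∈ r.posExt ++ r.negExt, ∀ a ∈ e.inputs, a ∉ U := by
        intro e hel a hain haU
        exact hgood h hC.2 a haU ⟨r, hr, hh.1, e, hel, hain⟩
      have heval : ∀ e ∈ r.posExt ++ r.negExt, e.eval (unplug A U) = e.eval A := by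
        intro e hel
        apply e.dep
        intro a hain
        have haU : a ∉ U := hinp e hel a hain
        simp [unplug, haU]
      rcases h2 with ⟨a, ha, hv⟩ | ⟨a, ha, hv⟩ | ⟨e, he, hv⟩ | ⟨e, he, hv⟩
      · by_cases haU : a ∈ U
        · have hOha : Orel P U h a := ⟨Or.inl ⟨r, hr, hh.1, ha⟩, hC.1, haU⟩
          have haC : a ∈ C := Finset.mem_filter.mpr ⟨haU, hC.2.tail hOha⟩
          exact Or.inl ⟨a, ha, by simp [unplug, haC]⟩
        · have hAa : A a = false := by simpa [unplug, haU] using hv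
          exact Or.inl ⟨a, ha, by simp [unplug, hAa]⟩
      · have hv' : A a = true ∧ a ∉ U := by simpa [unplug] using hv
        have haC : a ∉ C := fun hc => hv'.2 (hCsub hc)
        exact Or.inr (Or.inl ⟨a, ha, by simp [unplug, hv'.1, haC]⟩)
      · rw [heval e (List.mem_append.mpr (Or.inl he))] at hv
        exact Or.inr (Or.inr (Or.inl ⟨e, he, hv⟩))
      · rw [heval e (List.mem_append.mpr (Or.inr he))] at hv
        exact Or.inr (Or.inr (Or.inr ⟨e, he, hv⟩))
    · obtain ⟨h', hh', hnU, hA⟩ := h3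
      exact Or.inr (Or.inr ⟨h', hh', fun hc => hnU (hCsub hc), hA⟩)
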